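/- Let H = {x ∈ ℝⁿ : aᵀx ≤ b} be a half-space. Under the affine transformations x ↦ c(1−α) + pα + G(1−α)ξ with G invertible, the images of H at levels α₁ ≤ α₂ < 1 are half-spaces H^{α₁}, H^{α₂} with parallel, equally-directed normal vectors, and H^{α₂} ⊆ H^{α₁} whenever p satisfies aᵀG^{-1}(p − c) ≤ b·0 + b (i.e. p lies in the image of H under ξ ↦ c + Gξ). -/

import Mathlib

open Matrix

lemma image_halfspace_aux {n : ℕ} (G : Matrix (Fin n) (Fin n) ℝ)
    (hG : IsUnit G.det) (a : Fin n → ℝ) (b : ℝ) (d : Fin n → ℝ) (α : ℝ) (hα : α < 1) :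
    (fun x => d + ((1 - α) • G).mulVec x) '' {x | a ⬝ᵥ x ≤ b} =
      {x | ((1 - α)⁻¹ • (a ᵥ* G⁻¹)) ⬝ᵥ x ≤ b + ((1 - α)⁻¹ • (a ᵥ* G⁻¹)) ⬝ᵥ d} := by
  have hα' : (1 - α) ≠ 0 := by linarith
  ext x
  simp only [Set.mem_image, Set.mem_setOf_eq]
  constructor
  · rintro ⟨ξ, hξ, rfl⟩
    have key : (a ᵥ* G⁻¹) ⬝ᵥ (G.mulVec ξ) = a ⬝ᵥ ξ := by
      rw [Matrix.dotProduct_mulVec, Matrix.vecMul_vecMul, Matrix.nonsing_inv_mul G hG,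
        Matrix.vecMul_one]
    rw [dotProduct_add, Matrix.smul_mulVec, smul_dotProduct, smul_dotProduct,
      dotProduct_smul, key, smul_smul, inv_mul_cancel₀ hα', one_smul]
    linarith
  · intro hx
    refine ⟨G⁻¹.mulVec ((1 - α)⁻¹ • (x - d)), ?_, ?_⟩
    · have : a ⬝ᵥ G⁻¹.mulVec ((1 - α)⁻¹ • (x - d)) =
          ((1 - α)⁻¹ • (a ᵥ* G⁻¹)) ⬝ᵥ x - ((1 - α)⁻¹ • (a ᵥ* G⁻¹)) ⬝ᵥ d := by
        rw [Matrix.dotProduct_mulVec, dotProduct_smul, smul_dotProduct, smul_dotProduct,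
          dotProduct_sub]
        simp [smul_eq_mul, mul_sub]
      rw [this]; linarith [hx]
    · rw [Matrix.smul_mulVec, Matrix.mulVec_mulVec, Matrix.mul_nonsing_inv G hG,
        Matrix.one_mulVec]
      rw [smul_smul, mul_inv_cancel₀ hα', one_smul]
      abel

/-- Affine images of a half-space through the nested-zonotope transformations are
half-spaces with parallel equally-directed normals, and are nested whenever the core
point `p` lies in the image of `H` under `ξ ↦ c + Gξ`. -/
theorem halfspace_images_nested {n : ℕ} (G : Matrix (Fin n) (Fin n) ℝ)
    (hG : IsUnit G.det) (a : Fin n → ℝ) (ha : a ≠ 0) (b : ℝ)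
    (c p : Fin n → ℝ) (α₁ α₂ : ℝ)
    (h0 : 0 ≤ α₁) (h12 : α₁ ≤ α₂) (h2 : α₂ < 1)
    (hp : a ⬝ᵥ G⁻¹.mulVec (p - c) ≤ b * 0 + b) :
    ∃ (a₁ a₂ : Fin n → ℝ) (b₁ b₂ : ℝ) (lam : ℝ), 0 < lam ∧ a₂ = lam • a₁ ∧
      ((fun x => (1 - α₁) • c + α₁ • p + ((1 - α₁) • G).mulVec x) ''
          {x | a ⬝ᵥ x ≤ b} = {x | a₁ ⬝ᵥ x ≤ b₁}) ∧
      ((fun x => (1 - α₂) • c + α₂ • p + ((1 - α₂) • G).mulVec x) ''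
          {x | a ⬝ᵥ x ≤ b} = {x | a₂ ⬝ᵥ x ≤ b₂}) ∧
      {x | a₂ ⬝ᵥ x ≤ b₂} ⊆ {x | a₁ ⬝ᵥ x ≤ b₁} := by
  have h1 : α₁ < 1 := lt_of_le_of_lt h12 h2
  have e₁pos : (0:ℝ) < 1 - α₁ := by linarith
  have e₂pos : (0:ℝ) < 1 - α₂ := by linarith
  have e₁ne : (1:ℝ) - α₁ ≠ 0 := ne_of_gt e₁pos
  have e₂ne : (1:ℝ) - α₂ ≠ 0 := ne_of_gt e₂pos
  set w : Fin n → ℝ := a ᵥ* G⁻¹ with hw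
  refine ⟨(1 - α₁)⁻¹ • w, (1 - α₂)⁻¹ • w,
    b + ((1 - α₁)⁻¹ • w) ⬝ᵥ ((1 - α₁) • c + α₁ • p),
    b + ((1 - α₂)⁻¹ • w) ⬝ᵥ ((1 - α₂) • c + α₂ • p),
    (1 - α₁) / (1 - α₂), div_pos e₁pos e₂pos, ?_,
    image_halfspace_aux G hG a b _ α₁ h1,
    image_halfspace_aux G hG a b _ α₂ h2, ?_⟩
  · rw [smul_smul]
    congr 1
    field_simp
  · intro x hx
    simp only [Set.mem_setOf_eq, smul_dotProduct, smul_eq_mul] at hx ⊢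
    have hq : w ⬝ᵥ p - w ⬝ᵥ c ≤ b := by
      have : a ⬝ᵥ G⁻¹.mulVec (p - c) = w ⬝ᵥ p - w ⬝ᵥ c := by
        rw [Matrix.dotProduct_mulVec, ← hw, dotProduct_sub]
      linarith [hp.trans_eq (by ring : b * 0 + b = b) |>.trans_eq' this]
    set s : ℝ := w ⬝ᵥ c
    set t : ℝ := w ⬝ᵥ p
    have hd₁ : w ⬝ᵥ ((1 - α₁) • c + α₁ • p) = (1 - α₁) * s + α₁ * t := by
      rw [dotProduct_add, dotProduct_smul, dotProduct_smul]; simp [smul_eq_mul]; rfl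
    have hd₂ : w ⬝ᵥ ((1 - α₂) • c + α₂ • p) = (1 - α₂) * s + α₂ * t := by
      rw [dotProduct_add, dotProduct_smul, dotProduct_smul]; simp [smul_eq_mul]; rfl
    rw [hd₂] at hx
    rw [hd₁]
    set X : ℝ := w ⬝ᵥ x
    have hx' : X ≤ (1 - α₂) * b + ((1 - α₂) * s + α₂ * t) := by
      have h := mul_le_mul_of_nonneg_left hx e₂pos.le
      rw [mul_add, mul_inv_cancel_left₀ e₂ne, mul_inv_cancel_left₀ e₂ne] at h
      linarith
    rw [inv_mul_le_iff₀ e₁pos, mul_add, mul_inv_cancel_left₀ e₁ne]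
    nlinarith [mul_nonneg (sub_nonneg.2 h12) (sub_nonneg.2 hq)]
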